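/- Let c > 0, p ∈ (0,1), T > 0, and let g : ℝ → ℝ be differentiable on [0,T] with g(0) = p, 0 < g(t) < 1 for all t ∈ [0,T], and g'(t) ≥ c·g(t)·(1 − g(t)) for all t ∈ [0,T]. Then for every t ∈ [0,T], g(t) ≥ p·e^{ct}/(1 − p + p·e^{ct}). -/

import Mathlib

/-- Lower bound step (3.13)-(3.14): any supersolution of the logistic equation
`g' ≥ c g (1-g)` on `[0,T]` with `g(0) = p ∈ (0,1)` and `0 < g < 1` dominates the
logistic function `p e^{ct} / (1 - p + p e^{ct})` on `[0,T]`. -/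
theorem stmt_6 (c p T : ℝ) (hc : 0 < c) (hp : 0 < p) (hp1 : p < 1) (hT : 0 < T)
    (g g' : ℝ → ℝ)
    (hderiv : ∀ t ∈ Set.Icc (0 : ℝ) T, HasDerivAt g (g' t) t)
    (hg0 : g 0 = p)
    (hg01 : ∀ t ∈ Set.Icc (0 : ℝ) T, 0 < g t ∧ g t < 1)
    (hge : ∀ t ∈ Set.Icc (0 : ℝ) T, c * g t * (1 - g t) ≤ g' t) :
    ∀ t ∈ Set.Icc (0 : ℝ) T,
      p * Real.exp (c * t) / (1 - p + p * Real.exp (c * t)) ≤ g t := by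
  set h : ℝ → ℝ := fun t => Real.log (g t) - Real.log (1 - g t) - c * t with hh
  have hD : ∀ t ∈ Set.Icc (0 : ℝ) T,
      HasDerivAt h (g' t / g t + g' t / (1 - g t) - c) t := by
    intro t ht
    obtain ⟨hg, hg1⟩ := hg01 t ht
    have h1 : HasDerivAt (fun t => Real.log (g t)) (g' t / g t) t :=
      (hderiv t ht).log hg.ne'
    have h2 : HasDerivAt (fun t => Real.log (1 - g t)) (-(g' t) / (1 - g t)) t := by
      simpa using ((hasDerivAt_const t (1:ℝ)).sub (hderiv t ht)).log
        (by linarith : (1:ℝ) - g t ≠ 0)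
    have h3 : HasDerivAt (fun t => c * t) c t := by
      simpa using (hasDerivAt_id t).const_mul c
    have := (h1.sub h2).sub h3
    refine this.congr_deriv ?_
    ring
  have hdnn : ∀ t ∈ Set.Icc (0 : ℝ) T, 0 ≤ g' t / g t + g' t / (1 - g t) - c := by
    intro t ht
    obtain ⟨hg, hg1⟩ := hg01 t ht
    have hle := hge t ht
    have h1 : c * (1 - g t) ≤ g' t / g t := by
      rw [le_div_iff₀ hg]; nlinarith
    have h2 : c * g t ≤ g' t / (1 - g t) := by
      rw [le_div_iff₀ (by linarith : (0:ℝ) < 1 - g t)]; nlinarith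
    nlinarith
  have hmono : MonotoneOn h (Set.Icc 0 T) := by
    apply monotoneOn_of_deriv_nonneg (convex_Icc 0 T)
    · intro t ht
      exact ((hD t ht).continuousAt).continuousWithinAt
    · intro t ht
      rw [interior_Icc] at ht
      exact ((hD t (Set.mem_Icc_of_Ioo ht)).differentiableAt).differentiableWithinAt
    · intro t ht
      rw [interior_Icc] at ht
      rw [(hD t (Set.mem_Icc_of_Ioo ht)).deriv]
      exact hdnn t (Set.mem_Icc_of_Ioo ht)
  intro t ht
  obtain ⟨hg, hg1⟩ := hg01 t ht
  have h0mem : (0:ℝ) ∈ Set.Icc (0:ℝ) T := ⟨le_refl 0, hT.le⟩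
  have hle : h 0 ≤ h t := hmono h0mem ht ht.1
  simp only [hh, hg0, mul_zero, sub_zero] at hle
  -- exponentiate
  have key : Real.exp (c * t) * p / (1 - p) ≤ g t / (1 - g t) := by
    have : Real.exp (c * t + (Real.log p - Real.log (1 - p)))
        ≤ Real.exp (Real.log (g t) - Real.log (1 - g t)) := by
      apply Real.exp_le_exp.2; linarith
    rwa [Real.exp_add, Real.exp_sub, Real.exp_sub, Real.exp_log hp,
      Real.exp_log (by linarith : (0:ℝ) < 1 - p), Real.exp_log hg,
      Real.exp_log (by linarith : (0:ℝ) < 1 - g t), ← mul_div_assoc] at this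
  set E := Real.exp (c * t) with hE
  have hEpos : 0 < E := Real.exp_pos _
  have hcross : E * p * (1 - g t) ≤ g t * (1 - p) := by
    rw [div_le_div_iff₀ (by linarith) (by linarith)] at key
    linarith
  rw [div_le_iff₀ (by nlinarith : (0:ℝ) < 1 - p + p * E)]
  nlinarith
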